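/- For n ≥ 1, the cardinality of Q(n) equals 2^n − 2·binomial(n, ⌊n/2⌋). -/

import Mathlib

open Finset

/-- Cumulative sum: `x 0 + ... + x k`. -/
def cum {n : ℕ} (x : Fin n → ℤ) (k : Fin n) : ℤ := ∑ i ∈ Finset.Iic k, x i

/-- The partial order `⪯`: every partial sum of `x` is at most that of `y`. -/
def ple {n : ℕ} (x y : Fin n → ℤ) : Prop := ∀ k : Fin n, cum x k ≤ cum y k

/-- Membership in `P(n)`: all entries are `1` or `-1`. -/
def isPM {n : ℕ} (v : Fin n → ℤ) : Prop := ∀ i, v i = 1 ∨ v i = -1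

/-- Membership in `Q(n)`. -/
def inQ {n : ℕ} (v : Fin n → ℤ) : Prop := isPM v ∧ ¬ ple v 0 ∧ ¬ ple 0 v

/-- Standard inner product on `ℤ^n`. -/
def dotp {n : ℕ} (x y : Fin n → ℤ) : ℤ := ∑ i, x i * y i

/-- The ±1 vector of a subset `S`. -/
def pS {n : ℕ} (S : Finset (Fin n)) : Fin n → ℤ := fun i => if i ∈ S then 1 else -1

/-- The vector `m_k`: first `k` entries 1, next `k+1` entries −1, rest 1 (0-indexed). -/
def mvec (n k : ℕ) : Fin n → ℤ := fun i => if i.val < k then 1 else if i.val < 2 * k + 1 then -1 else 1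

/-- An instance of the partition problem: `c_1 ≥ c_2 ≥ ⋯ ≥ c_n ≥ 0`. -/
def monoc {n : ℕ} (c : Fin n → ℤ) : Prop := (∀ i j : Fin n, i ≤ j → c j ≤ c i) ∧ ∀ i, 0 ≤ c i

def G (n h : ℕ) : ℕ :=
  ∑ k ∈ Finset.range (n+1), if n ≤ 2*k + h ∧ 2*k ≤ n + h + (n+h) % 2 then n.choose k else 0

lemma Gext (n h m : ℕ) (hm : n < m) :
    G n h = ∑ k ∈ Finset.range m, if n ≤ 2*k + h ∧ 2*k ≤ n + h + (n+h) % 2 then n.choose k else 0 := by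
  unfold G
  apply Finset.sum_subset
  · intro x hx; simp only [mem_range] at *; omega
  · intro x hx hx2
    simp only [mem_range, not_lt] at hx2
    have : n.choose x = 0 := Nat.choose_eq_zero_of_lt (by omega)
    simp [this]

lemma G0 (h : ℕ) : G 0 h = 1 := by
  simp [G]

lemma Gzero (n : ℕ) : G n 0 = n.choose (n / 2) := by
  unfold G
  rw [Finset.sum_eq_single_of_mem ((n+1)/2) (by simp [mem_range]; omega)]
  · have : n ≤ 2*((n+1)/2) + 0 ∧ 2*((n+1)/2) ≤ n + 0 + (n+0)%2 := by omega
    rw [if_pos this]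
    rcases Nat.even_or_odd n with he | ho
    · obtain ⟨m, rfl⟩ := he; congr 1; omega
    · have h1 : (n+1)/2 ≤ n := by omega
      obtain ⟨m, rfl⟩ := ho
      rw [← Nat.choose_symm h1]
      congr 1; omega
  · intro k hk hne
    rw [if_neg]; omega

lemma key1 (n h k c : ℕ) :
    ((if n+1 ≤ 2*(k+1) + (h+1) ∧ 2*(k+1) ≤ (n+1) + (h+1) + ((n+1)+(h+1)) % 2 then c else 0)
      + (if n+1 ≤ 2*k + (h+1) ∧ 2*k ≤ (n+1) + (h+1) + ((n+1)+(h+1)) % 2 then c else 0))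
    = (if n ≤ 2*k + (h+2) ∧ 2*k ≤ n + (h+2) + (n+(h+2)) % 2 then c else 0)
      + (if n ≤ 2*k + h ∧ 2*k ≤ n + h + (n+h) % 2 then c else 0) := by
  split_ifs <;> omega

lemma key0 (n k c : ℕ) :
    ((if n+1 ≤ 2*(k+1) + 0 ∧ 2*(k+1) ≤ (n+1) + 0 + ((n+1)+0) % 2 then c else 0)
      + (if n+1 ≤ 2*k + 0 ∧ 2*k ≤ (n+1) + 0 + ((n+1)+0) % 2 then c else 0))
    = (if n ≤ 2*k + 1 ∧ 2*k ≤ n + 1 + (n+1) % 2 then c else 0) := by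
  split_ifs <;> omega

lemma GrecAux (n h' : ℕ) :
    (∑ k ∈ Finset.range (n+4), if n+1 ≤ 2*k + h' ∧ 2*k ≤ (n+1) + h' + ((n+1)+h') % 2 then (n+1).choose k else 0)
    = ∑ k ∈ Finset.range (n+4),
        ((if n+1 ≤ 2*(k+1) + h' ∧ 2*(k+1) ≤ (n+1) + h' + ((n+1)+h') % 2 then n.choose k else 0)
          + (if n+1 ≤ 2*k + h' ∧ 2*k ≤ (n+1) + h' + ((n+1)+h') % 2 then n.choose k else 0)) := by
  conv_lhs => rw [show (n+4) = (n+3)+1 from rfl, Finset.sum_range_succ']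
  have hsplit : ∀ k ∈ Finset.range (n+3),
      (if n+1 ≤ 2*(k+1) + h' ∧ 2*(k+1) ≤ (n+1) + h' + ((n+1)+h') % 2 then (n+1).choose (k+1) else 0)
      = (if n+1 ≤ 2*(k+1) + h' ∧ 2*(k+1) ≤ (n+1) + h' + ((n+1)+h') % 2 then n.choose k else 0)
        + (if n+1 ≤ 2*(k+1) + h' ∧ 2*(k+1) ≤ (n+1) + h' + ((n+1)+h') % 2 then n.choose (k+1) else 0) := by
    intro k _
    rw [Nat.choose_succ_succ]
    split_ifs <;> simp
  rw [Finset.sum_congr rfl hsplit, Finset.sum_add_distrib]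
  conv_rhs => rw [Finset.sum_add_distrib]
  rw [add_assoc]
  congr 1
  · conv_rhs => rw [show (n+4) = (n+3)+1 from rfl, Finset.sum_range_succ]
    have hz : n.choose (n+3) = 0 := Nat.choose_eq_zero_of_lt (by omega)
    simp [hz]
  · conv_rhs => rw [show (n+4) = (n+3)+1 from rfl, Finset.sum_range_succ']
    congr 1
    rw [Nat.choose_zero_right, Nat.choose_zero_right]

lemma GrecS (n h : ℕ) : G (n+1) (h+1) = G n (h+2) + G n h := by
  rw [Gext (n+1) (h+1) (n+4) (by omega), GrecAux n (h+1),
    Gext n (h+2) (n+4) (by omega), Gext n h (n+4) (by omega), ← Finset.sum_add_distrib]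
  exact Finset.sum_congr rfl (fun k _ => key1 n h k (n.choose k))

lemma Grec0 (n : ℕ) : G (n+1) 0 = G n 1 := by
  rw [Gext (n+1) 0 (n+4) (by omega), GrecAux n 0, Gext n 1 (n+4) (by omega)]
  exact Finset.sum_congr rfl (fun k _ => key0 n k (n.choose k))

lemma cum_eq_ite {n : ℕ} (x : Fin n → ℤ) (k : Fin n) :
    cum x k = ∑ i : Fin n, if i ≤ k then x i else 0 := by
  unfold cum
  rw [← Finset.sum_filter]
  congr 1
  ext i
  simp

lemma cum_zero {n : ℕ} (v : Fin (n+1) → ℤ) : cum v 0 = v 0 := by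
  rw [cum_eq_ite, Fin.sum_univ_succ]
  simp [Fin.le_zero_iff, Fin.succ_ne_zero]

lemma cum_succ {n : ℕ} (v : Fin (n+1) → ℤ) (k : Fin n) :
    cum v k.succ = v 0 + cum (Fin.tail v) k := by
  rw [cum_eq_ite, cum_eq_ite, Fin.sum_univ_succ, if_pos (Fin.zero_le _)]
  congr 1
  apply Finset.sum_congr rfl
  intro i _
  simp only [Fin.succ_le_succ_iff]
  rfl

def pmOf {n : ℕ} (f : Fin n → Bool) : Fin n → ℤ := fun i => if f i then 1 else -1

noncomputable def cnt (n h : ℕ) : ℕ :=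
  Set.ncard {f : Fin n → Bool | ∀ k : Fin n, 0 ≤ (h:ℤ) + cum (pmOf f) k}

lemma split_cond {n : ℕ} (f : Fin (n+1) → Bool) (H : ℤ) :
    (∀ k : Fin (n+1), 0 ≤ H + cum (pmOf f) k)
    ↔ (0 ≤ H + (if f 0 then 1 else -1)
        ∧ ∀ k : Fin n, 0 ≤ (H + (if f 0 then 1 else -1)) + cum (pmOf (Fin.tail f)) k) := by
  rw [Fin.forall_fin_succ]
  constructor
  · rintro ⟨h0, hs⟩
    rw [cum_zero] at h0
    refine ⟨h0, fun k => ?_⟩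
    have := hs k
    rw [cum_succ] at this
    have htail : Fin.tail (pmOf f) = pmOf (Fin.tail f) := rfl
    rw [htail] at this
    have : 0 ≤ H + ((if f 0 then (1:ℤ) else -1) + cum (pmOf (Fin.tail f)) k) := this
    linarith
  · rintro ⟨h0, hs⟩
    refine ⟨by rw [cum_zero]; exact h0, fun k => ?_⟩
    rw [cum_succ]
    have htail : Fin.tail (pmOf f) = pmOf (Fin.tail f) := rfl
    rw [htail]
    have := hs k
    have hval : pmOf f 0 = (if f 0 then (1:ℤ) else -1) := rfl
    rw [hval]
    linarith

lemma set_split (n h : ℕ) :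
    {f : Fin (n+1) → Bool | ∀ k : Fin (n+1), 0 ≤ (h:ℤ) + cum (pmOf f) k}
    = (Fin.cons true '' {g : Fin n → Bool | ∀ k : Fin n, 0 ≤ ((h:ℤ)+1) + cum (pmOf g) k})
      ∪ (Fin.cons false '' {g : Fin n → Bool |
          0 ≤ (h:ℤ) - 1 ∧ ∀ k : Fin n, 0 ≤ ((h:ℤ)-1) + cum (pmOf g) k}) := by
  ext f
  simp only [Set.mem_setOf_eq, Set.mem_union, Set.mem_image]
  rw [split_cond]
  constructor
  · rintro ⟨h0, hs⟩
    cases hb : f 0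
    · right
      refine ⟨Fin.tail f, ⟨?_, ?_⟩, ?_⟩
      · rw [hb] at h0; simpa using h0
      · intro k
        have := hs k
        rw [hb] at this
        simp at this ⊢; linarith
      · rw [← hb]; exact Fin.cons_self_tail f
    · left
      refine ⟨Fin.tail f, ?_, ?_⟩
      · intro k
        have := hs k
        rw [hb] at this
        simpa using this
      · rw [← hb]; exact Fin.cons_self_tail f
  · rintro (⟨g, hg, rfl⟩ | ⟨g, ⟨hg0, hg⟩, rfl⟩)
    · rw [Fin.cons_zero, Fin.tail_cons]
      constructor
      · simp; positivity
      · intro k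
        have := hg k
        simpa using this
    · rw [Fin.cons_zero, Fin.tail_cons]
      constructor
      · simpa using hg0
      · intro k
        have := hg k
        simp at this ⊢; linarith

lemma cnt_base (h : ℕ) : cnt 0 h = 1 := by
  unfold cnt
  have : {f : Fin 0 → Bool | ∀ k : Fin 0, 0 ≤ (h:ℤ) + cum (pmOf f) k} = Set.univ := by
    ext f
    simp [Fin.forall_fin_zero_pi]
  rw [this, Set.ncard_univ, Nat.card_eq_fintype_card]
  simp

lemma disj_cons {n : ℕ} (A B : Set (Fin n → Bool)) :
    Disjoint (Fin.cons (α := fun _ : Fin (n+1) => Bool) true '' A)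
      (Fin.cons (α := fun _ : Fin (n+1) => Bool) false '' B) := by
  rw [Set.disjoint_left]
  rintro f ⟨g, _, rfl⟩ ⟨g', _, hg'⟩
  have := congrFun hg' 0
  simp at this

lemma cnt_rec (n h : ℕ) :
    cnt (n+1) h = cnt n (h+1)
      + Set.ncard {g : Fin n → Bool |
          0 ≤ (h:ℤ) - 1 ∧ ∀ k : Fin n, 0 ≤ ((h:ℤ)-1) + cum (pmOf g) k} := by
  unfold cnt
  rw [set_split, Set.ncard_union_eq (disj_cons _ _) (Set.toFinite _) (Set.toFinite _),
    Set.ncard_image_of_injective _ (Fin.cons_right_injective _),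
    Set.ncard_image_of_injective _ (Fin.cons_right_injective _)]
  have hc : ((h:ℤ)+1) = ((h+1:ℕ):ℤ) := by push_cast; ring
  rw [hc]

lemma cnt_rec0 (n : ℕ) : cnt (n+1) 0 = cnt n 1 := by
  rw [cnt_rec]
  have : {g : Fin n → Bool | 0 ≤ ((0:ℕ):ℤ) - 1 ∧ ∀ k : Fin n, 0 ≤ (((0:ℕ):ℤ)-1) + cum (pmOf g) k} = ∅ := by
    ext g; simp
  rw [this]
  simp

lemma cnt_recS (n h : ℕ) : cnt (n+1) (h+1) = cnt n (h+2) + cnt n h := by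
  rw [cnt_rec]
  congr 1
  unfold cnt
  congr 1
  ext g
  constructor
  · rintro ⟨_, hg⟩
    intro k
    have := hg k
    push_cast at this ⊢
    linarith
  · intro hg
    refine ⟨by push_cast; omega, fun k => ?_⟩
    have := hg k
    push_cast at this ⊢
    linarith



lemma cnt_eq_G (n : ℕ) : ∀ h, cnt n h = G n h := by
  induction n with
  | zero => intro h; rw [cnt_base, G0]
  | succ m ih =>
    intro h
    cases h with
    | zero => rw [cnt_rec0, Grec0, ih]
    | succ j => rw [cnt_recS, GrecS, ih, ih]

lemma cum_neg {n : ℕ} (v : Fin n → ℤ) (k : Fin n) : cum (-v) k = -cum v k := by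
  unfold cum
  simp

lemma pmOf_not {n : ℕ} (f : Fin n → Bool) : pmOf (fun i => !(f i)) = -(pmOf f) := by
  funext i
  simp only [pmOf, Pi.neg_apply]
  by_cases h : f i = true <;> simp [h]

lemma pmOf_injective {n : ℕ} : Function.Injective (pmOf (n := n)) := by
  intro f g hfg
  funext i
  have := congrFun hfg i
  simp only [pmOf] at this
  cases hf : f i <;> cases hg : g i <;> rw [hf, hg] at this <;> simp_all

lemma isPM_pmOf {n : ℕ} (f : Fin n → Bool) : isPM (pmOf f) := by
  intro i
  simp only [pmOf]
  by_cases h : f i = true <;> simp [h]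

lemma cum_zero_fun {n : ℕ} (k : Fin n) : cum (0 : Fin n → ℤ) k = 0 := by
  unfold cum
  simp

lemma ple_zero_left {n : ℕ} (v : Fin n → ℤ) : ple 0 v ↔ ∀ k, 0 ≤ ((0:ℕ):ℤ) + cum v k := by
  unfold ple
  simp [cum_zero_fun]

lemma ple_zero_right {n : ℕ} (v : Fin n → ℤ) : ple v 0 ↔ ∀ k, 0 ≤ ((0:ℕ):ℤ) + cum (-v) k := by
  unfold ple
  constructor
  · intro h k; have := h k; rw [cum_neg]; simp [cum_zero_fun] at this ⊢; linarith
  · intro h k; have := h k; rw [cum_neg] at this; simp [cum_zero_fun] at this ⊢; linarith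

lemma card_ge (n : ℕ) :
    Set.ncard {f : Fin n → Bool | ple 0 (pmOf f)} = Nat.choose n (n/2) := by
  have : {f : Fin n → Bool | ple 0 (pmOf f)}
      = {f : Fin n → Bool | ∀ k, 0 ≤ ((0:ℕ):ℤ) + cum (pmOf f) k} := by
    ext f; exact ple_zero_left _
  rw [this]
  have := cnt_eq_G n 0
  unfold cnt at this
  rw [this, Gzero]

lemma card_le (n : ℕ) :
    Set.ncard {f : Fin n → Bool | ple (pmOf f) 0} = Nat.choose n (n/2) := by
  have himg : {f : Fin n → Bool | ple (pmOf f) 0}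
      = (fun f i => !(f i)) '' {f : Fin n → Bool | ple 0 (pmOf f)} := by
    ext f
    simp only [Set.mem_setOf_eq, Set.mem_image]
    constructor
    · intro hf
      refine ⟨fun i => !(f i), ?_, ?_⟩
      · rw [ple_zero_left]
        intro k
        rw [pmOf_not, cum_neg]
        have := (ple_zero_right _).mp hf k
        rw [cum_neg] at this
        linarith
      · funext i; simp
    · rintro ⟨g, hg, rfl⟩
      rw [ple_zero_right]
      intro k
      rw [pmOf_not, cum_neg, cum_neg]
      have := (ple_zero_left _).mp hg k
      linarith
  rw [himg, Set.ncard_image_of_injective, card_ge]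
  intro f g hfg
  funext i
  have := congrFun hfg i
  simpa using this

theorem stmt5_aux {n : ℕ} (hn : 1 ≤ n) :
    Set.ncard {v : Fin n → ℤ | inQ v} = 2 ^ n - 2 * Nat.choose n (n / 2) := by
  classical
  have himg : {v : Fin n → ℤ | inQ v} = pmOf '' {f : Fin n → Bool | inQ (pmOf f)} := by
    ext v
    simp only [Set.mem_setOf_eq, Set.mem_image]
    constructor
    · intro hv
      have heq : pmOf (fun i => decide (v i = 1)) = v := by
        funext i
        simp only [pmOf]
        rcases hv.1 i with h1 | h1 <;> simp [h1]
      exact ⟨fun i => decide (v i = 1), by rw [heq]; exact hv, heq⟩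
    · rintro ⟨f, hf, rfl⟩; exact hf
  rw [himg, Set.ncard_image_of_injective _ pmOf_injective]
  have hq : {f : Fin n → Bool | inQ (pmOf f)}
      = Set.univ \ ({f : Fin n → Bool | ple (pmOf f) 0} ∪ {f : Fin n → Bool | ple 0 (pmOf f)}) := by
    ext f
    simp only [Set.mem_setOf_eq, Set.mem_diff, Set.mem_univ, Set.mem_union, true_and, inQ]
    have := isPM_pmOf f
    tauto
  rw [hq]
  rw [Set.ncard_diff (Set.subset_univ _) (Set.toFinite _)]
  have hdisj : Disjoint {f : Fin n → Bool | ple (pmOf f) 0} {f : Fin n → Bool | ple 0 (pmOf f)} := by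
    rw [Set.disjoint_left]
    intro f hf1 hf2
    obtain ⟨m, rfl⟩ : ∃ m, n = m + 1 := ⟨n - 1, by omega⟩
    have h1 : cum (pmOf f) 0 ≤ cum 0 0 := hf1 0
    have h2 : cum (0 : Fin (m+1) → ℤ) 0 ≤ cum (pmOf f) 0 := hf2 0
    rw [cum_zero, cum_zero] at h1 h2
    simp only [Pi.zero_apply] at h1 h2
    have : pmOf f 0 = 1 ∨ pmOf f 0 = -1 := isPM_pmOf f 0
    omega
  rw [Set.ncard_union_eq hdisj (Set.toFinite _) (Set.toFinite _), card_le, card_ge]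
  have huniv : (Set.univ : Set (Fin n → Bool)).ncard = 2 ^ n := by
    rw [Set.ncard_univ, Nat.card_eq_fintype_card]
    simp
  rw [huniv, two_mul]

theorem stmt5FINAL {n : ℕ} (hn : 1 ≤ n) :
    Set.ncard {v : Fin n → ℤ | inQ v} = 2 ^ n - 2 * Nat.choose n (n / 2) :=
  stmt5_aux hn

theorem stmt5 {n : ℕ} (hn : 1 ≤ n) :
    Set.ncard {v : Fin n → ℤ | inQ v} = 2 ^ n - 2 * Nat.choose n (n / 2) :=
  stmt5_aux hn
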